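/- arXiv:1807.09727 — 2 statements merged into one kernel-verified Lean document; each statement's English description precedes it below -/
import Mathlib

section
/- Let N ≥ 3, R₀ > 0, Ω = {x ∈ ℝ^N : |x| > R₀}, and let E : Ω → ℝ be a smooth positive function with −ΔE ≥ 0 on Ω. Then liminf_{|x|→∞} |x|² · (−ΔE(x))/E(x) ≤ (N−2)²/4. -/
open MeasureTheory Filter

/-- The Laplacian of a function on Euclidean space. -/
noncomputable def lap {N : ℕ} (f : EuclideanSpace ℝ (Fin N) → ℝ)
    (x : EuclideanSpace ℝ (Fin N)) : ℝ :=
  ∑ i, fderiv ℝ (fun y => fderiv ℝ f y (EuclideanSpace.single i 1)) x (EuclideanSpace.single i 1)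

namespace S14

open Filter Real

/-- one-dimensional second derivative test at a local minimum -/
lemma deriv2_test {f f' : ℝ → ℝ} {a : ℝ} (hmin : IsLocalMin f 0)
    (hf : ∀ᶠ τ in nhds (0:ℝ), HasDerivAt f (f' τ) τ) (hf' : HasDerivAt f' a 0) : 0 ≤ a := by
  by_contra hneg
  push_neg at hneg
  have h0 : f' 0 = 0 := hmin.hasDerivAt_eq_zero hf.self_of_nhds
  have hslope := hasDerivAt_iff_tendsto_slope.mp hf'
  have hsl' : ∀ᶠ τ in nhdsWithin (0:ℝ) {(0:ℝ)}ᶜ, slope f' 0 τ < 0 :=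
    hslope.eventually_lt_const hneg
  have hsl : ∀ᶠ τ in nhdsWithin (0:ℝ) (Set.Ioi 0), slope f' 0 τ < 0 :=
    hsl'.filter_mono (nhdsWithin_mono _ (fun τ hτ => ne_of_gt hτ))
  have hf'neg : ∀ᶠ τ in nhdsWithin (0:ℝ) (Set.Ioi 0), f' τ < 0 := by
    filter_upwards [hsl, self_mem_nhdsWithin] with τ h hτ
    have hτ0 : (0:ℝ) < τ := hτ
    have hs : slope f' 0 τ = f' τ / τ := by
      simp [slope_def_field, h0]
    rw [hs] at h
    have := mul_neg_of_neg_of_pos h hτ0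
    rwa [div_mul_cancel₀ _ (ne_of_gt hτ0)] at this
  obtain ⟨δ₁, hδ₁mem, hδ₁⟩ := mem_nhdsGT_iff_exists_Ioo_subset.mp hf'neg
  have hδ₁pos : 0 < δ₁ := hδ₁mem
  obtain ⟨ε, hεpos, hε⟩ := Metric.eventually_nhds_iff.mp hf
  obtain ⟨ε₂, hε₂pos, hε₂⟩ := Metric.eventually_nhds_iff.mp hmin
  set δ := min δ₁ (min ε ε₂) / 2 with hδdef
  have hδpos : 0 < δ := by positivity
  have hδδ₁ : δ < δ₁ := by
    have := min_le_left δ₁ (min ε ε₂); simp only [hδdef]; linarith [hδ₁pos]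
  have hδε : δ < ε := by
    have h1 := min_le_right δ₁ (min ε ε₂)
    have h2 := min_le_left ε ε₂
    simp only [hδdef]; linarith [hδpos]
  have hδε₂ : δ < ε₂ := by
    have h1 := min_le_right δ₁ (min ε ε₂)
    have h2 := min_le_right ε ε₂
    simp only [hδdef]; linarith [hδpos]
  have hHD : ∀ τ ∈ Set.Icc (0:ℝ) δ, HasDerivAt f (f' τ) τ := by
    intro τ hτ
    apply hε
    rw [Real.dist_eq, sub_zero, abs_of_nonneg hτ.1]
    exact lt_of_le_of_lt hτ.2 hδε
  have hanti : StrictAntiOn f (Set.Icc (0:ℝ) δ) := by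
    apply strictAntiOn_of_deriv_neg (convex_Icc _ _)
    · intro τ hτ
      exact ((hHD τ hτ).differentiableAt.continuousAt).continuousWithinAt
    · intro τ hτ
      rw [interior_Icc] at hτ
      rw [(hHD τ ⟨le_of_lt hτ.1, le_of_lt hτ.2⟩).deriv]
      exact hδ₁ ⟨hτ.1, lt_of_lt_of_le hτ.2 (le_of_lt hδδ₁)⟩
  have h1 : f δ < f 0 :=
    hanti (Set.left_mem_Icc.mpr (le_of_lt hδpos)) (Set.right_mem_Icc.mpr (le_of_lt hδpos)) hδpos
  have h2 : f 0 ≤ f δ := by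
    apply hε₂
    rw [Real.dist_eq, sub_zero, abs_of_nonneg (le_of_lt hδpos)]
    exact hδε₂
  linarith


lemma differentiableAt_fderiv_apply {N : ℕ} {f : EuclideanSpace ℝ (Fin N) → ℝ}
    {x : EuclideanSpace ℝ (Fin N)} (e : EuclideanSpace ℝ (Fin N))
    (hf : ContDiffAt ℝ (⊤:ℕ∞) f x) :
    DifferentiableAt ℝ (fun y => fderiv ℝ f y e) x := by
  have h1 : ContDiffAt ℝ 1 (fderiv ℝ f) x := by
    apply hf.fderiv_right
    exact WithTop.coe_le_coe.mpr le_top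
  exact (h1.differentiableAt one_ne_zero).clm_apply (differentiableAt_const e)

lemma second_directional_nonneg {N : ℕ} {f : EuclideanSpace ℝ (Fin N) → ℝ}
    {x₀ : EuclideanSpace ℝ (Fin N)} {U : Set (EuclideanSpace ℝ (Fin N))}
    (hU : IsOpen U) (hx₀ : x₀ ∈ U) (hf : ContDiffOn ℝ (⊤:ℕ∞) f U)
    (hmin : IsLocalMin f x₀) (e : EuclideanSpace ℝ (Fin N)) :
    0 ≤ fderiv ℝ (fun y => fderiv ℝ f y e) x₀ e := by
  set L : ℝ → EuclideanSpace ℝ (Fin N) := fun τ => x₀ + τ • e with hLdef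
  have hLcont : Continuous L := continuous_const.add (continuous_id.smul continuous_const)
  have hL0 : L 0 = x₀ := by simp [hLdef]
  have hLd : ∀ τ, HasDerivAt L e τ := by
    intro τ
    have h := ((hasDerivAt_id τ).smul_const e).const_add x₀
    simpa only [id_eq, one_smul] using h
  have hUmem : ∀ᶠ τ in nhds (0:ℝ), L τ ∈ U := by
    have := (hLcont.continuousAt (x := (0:ℝ))).preimage_mem_nhds
      (hU.mem_nhds (by rw [hL0]; exact hx₀))
    exact this
  have hφ : ∀ᶠ τ in nhds (0:ℝ), HasDerivAt (fun σ => f (L σ)) (fderiv ℝ f (L τ) e) τ := by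
    filter_upwards [hUmem] with τ hτ
    have hdiff : DifferentiableAt ℝ f (L τ) :=
      (hf.contDiffAt (hU.mem_nhds hτ)).differentiableAt (by simp)
    exact hdiff.hasFDerivAt.comp_hasDerivAt τ (hLd τ)
  have hc2 : ContDiffAt ℝ (⊤:ℕ∞) f x₀ := hf.contDiffAt (hU.mem_nhds hx₀)
  have hg1d : DifferentiableAt ℝ (fun y => fderiv ℝ f y e) x₀ :=
    differentiableAt_fderiv_apply e hc2
  have hF' : HasDerivAt (fun τ => fderiv ℝ f (L τ) e)
      (fderiv ℝ (fun y => fderiv ℝ f y e) x₀ e) 0 := by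
    have h1 : HasFDerivAt (fun y => fderiv ℝ f y e)
        (fderiv ℝ (fun y => fderiv ℝ f y e) x₀) (L 0) := by
      rw [hL0]; exact hg1d.hasFDerivAt
    exact h1.comp_hasDerivAt 0 (hLd 0)
  have hminφ : IsLocalMin (fun σ => f (L σ)) 0 := by
    have htd : Tendsto L (nhds 0) (nhds x₀) := by
      have := hLcont.continuousAt (x := (0:ℝ)); rwa [ContinuousAt, hL0] at this
    have hev : ∀ᶠ τ in nhds (0:ℝ), f x₀ ≤ f (L τ) := htd.eventually hmin
    have : f (L 0) = f x₀ := by rw [hL0]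
    unfold IsLocalMin IsMinFilter
    simpa [this] using hev
  exact deriv2_test hminφ hφ hF'

lemma lap_sub_smul {N : ℕ} {U : Set (EuclideanSpace ℝ (Fin N))} (hU : IsOpen U)
    {f g : EuclideanSpace ℝ (Fin N) → ℝ} (hf : ContDiffOn ℝ (⊤:ℕ∞) f U)
    (hg : ContDiffOn ℝ (⊤:ℕ∞) g U) (κ : ℝ) {x : EuclideanSpace ℝ (Fin N)} (hx : x ∈ U) :
    lap (fun y => f y - κ * g y) x = lap f x - κ * lap g x := by
  unfold lap
  rw [Finset.mul_sum, ← Finset.sum_sub_distrib]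
  apply Finset.sum_congr rfl
  intro i _
  set e := EuclideanSpace.single i (1:ℝ)
  have hev : (fun y => fderiv ℝ (fun z => f z - κ * g z) y e) =ᶠ[nhds x]
      (fun y => fderiv ℝ f y e - κ * fderiv ℝ g y e) := by
    filter_upwards [hU.mem_nhds hx] with y hy
    have hfy : DifferentiableAt ℝ f y :=
      (hf.contDiffAt (hU.mem_nhds hy)).differentiableAt (by simp)
    have hgy : DifferentiableAt ℝ g y :=
      (hg.contDiffAt (hU.mem_nhds hy)).differentiableAt (by simp)
    rw [fderiv_fun_sub hfy (hgy.const_mul κ), fderiv_const_mul hgy κ]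
    simp
  rw [hev.fderiv_eq]
  have h1 : DifferentiableAt ℝ (fun y => fderiv ℝ f y e) x :=
    differentiableAt_fderiv_apply e (hf.contDiffAt (hU.mem_nhds hx))
  have h2 : DifferentiableAt ℝ (fun y => fderiv ℝ g y e) x :=
    differentiableAt_fderiv_apply e (hg.contDiffAt (hU.mem_nhds hx))
  rw [fderiv_fun_sub h1 (h2.const_mul κ), fderiv_const_mul h2 κ]
  simp



noncomputable def g (lam mu t : ℝ) : ℝ := Real.exp (-(lam * t)) * Real.cos (mu * t)
noncomputable def g1 (lam mu t : ℝ) : ℝ :=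
  Real.exp (-(lam * t)) * (-(lam * Real.cos (mu * t)) - mu * Real.sin (mu * t))
noncomputable def g2 (lam mu t : ℝ) : ℝ :=
  Real.exp (-(lam * t)) * ((lam^2 - mu^2) * Real.cos (mu * t) + 2*lam*mu * Real.sin (mu * t))

lemma hasDerivAt_exp_neg (lam t : ℝ) :
    HasDerivAt (fun t => Real.exp (-(lam * t))) (-lam * Real.exp (-(lam * t))) t := by
  have h : HasDerivAt (fun t : ℝ => -(lam * t)) (-lam) t := by
    simpa using ((hasDerivAt_id t).const_mul lam).fun_neg
  simpa [mul_comm] using h.exp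

lemma hasDerivAt_g (lam mu t : ℝ) : HasDerivAt (g lam mu) (g1 lam mu t) t := by
  have hc : HasDerivAt (fun t => Real.cos (mu * t)) (-Real.sin (mu * t) * mu) t := by
    have h : HasDerivAt (fun t : ℝ => mu * t) mu t := by
      simpa using (hasDerivAt_id t).const_mul mu
    exact h.cos
  have := (hasDerivAt_exp_neg lam t).mul hc
  refine this.congr_deriv ?_
  unfold g1; ring

lemma hasDerivAt_g1 (lam mu t : ℝ) : HasDerivAt (g1 lam mu) (g2 lam mu t) t := by
  have hc : HasDerivAt (fun t => Real.cos (mu * t)) (-Real.sin (mu * t) * mu) t := by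
    have h : HasDerivAt (fun t : ℝ => mu * t) mu t := by
      simpa using (hasDerivAt_id t).const_mul mu
    exact h.cos
  have hs : HasDerivAt (fun t => Real.sin (mu * t)) (Real.cos (mu * t) * mu) t := by
    have h : HasDerivAt (fun t : ℝ => mu * t) mu t := by
      simpa using (hasDerivAt_id t).const_mul mu
    exact h.sin
  have hin : HasDerivAt (fun t => -(lam * Real.cos (mu * t)) - mu * Real.sin (mu * t))
      (-(lam * (-Real.sin (mu * t) * mu)) - mu * (Real.cos (mu * t) * mu)) t :=
    ((hc.const_mul lam).neg).sub (hs.const_mul mu)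
  have := (hasDerivAt_exp_neg lam t).mul hin
  refine this.congr_deriv ?_
  unfold g2; ring

lemma g_identity (lam mu t : ℝ) :
    g2 lam mu t + 2*lam * g1 lam mu t = -(lam^2 + mu^2) * g lam mu t := by
  unfold g g1 g2; ring

lemma contDiff_g (lam mu : ℝ) : ContDiff ℝ (⊤:ℕ∞) (g lam mu) := by
  unfold g
  exact (Real.contDiff_exp.comp ((contDiff_id.const_smul lam).neg)).mul
    (Real.contDiff_cos.comp (contDiff_id.const_smul mu))

noncomputable def sfun {N : ℕ} (x : EuclideanSpace ℝ (Fin N)) : ℝ := ∑ j, x j * x j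

noncomputable def Ls {N : ℕ} (x : EuclideanSpace ℝ (Fin N)) :
    EuclideanSpace ℝ (Fin N) →L[ℝ] ℝ :=
  ∑ j, (2 * x j) • (EuclideanSpace.proj j)

noncomputable def ufun {N : ℕ} (x : EuclideanSpace ℝ (Fin N)) : ℝ := Real.log (sfun x) / 2

noncomputable def vfun (lam mu : ℝ) {N : ℕ} (x : EuclideanSpace ℝ (Fin N)) : ℝ :=
  g lam mu (ufun x)

lemma hasFDerivAt_sfun {N : ℕ} (x : EuclideanSpace ℝ (Fin N)) :
    HasFDerivAt sfun (Ls x) x := by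
  have h : ∀ j : Fin N, HasFDerivAt (fun y : EuclideanSpace ℝ (Fin N) => y j * y j)
      ((2 * x j) • (EuclideanSpace.proj (𝕜 := ℝ) j)) x := by
    intro j
    have hp : HasFDerivAt (fun y : EuclideanSpace ℝ (Fin N) => y j)
        (EuclideanSpace.proj (𝕜 := ℝ) j) x := (EuclideanSpace.proj (𝕜 := ℝ) j).hasFDerivAt
    have := hp.mul hp
    refine this.congr_fderiv ?_
    rw [two_mul, add_smul]
  exact HasFDerivAt.fun_sum (fun j _ => h j)

lemma Ls_apply {N : ℕ} (x : EuclideanSpace ℝ (Fin N)) (i : Fin N) :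
    Ls x (EuclideanSpace.single i (1:ℝ)) = 2 * x i := by
  unfold Ls
  rw [ContinuousLinearMap.sum_apply]
  have : ∀ j : Fin N, ((2 * x j) • (EuclideanSpace.proj (𝕜 := ℝ) j))
      (EuclideanSpace.single i (1:ℝ)) = if i = j then 2 * x j else 0 := by
    intro j
    rw [ContinuousLinearMap.smul_apply]
    have : (EuclideanSpace.proj (𝕜 := ℝ) j) (EuclideanSpace.single i (1:ℝ))
        = if i = j then 1 else 0 := by
      show (EuclideanSpace.single i (1:ℝ)) j = _
      rw [EuclideanSpace.single_apply]
      simp [eq_comm]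
    rw [this]
    split <;> simp
  rw [Finset.sum_congr rfl (fun j _ => this j)]
  simp

lemma sfun_eq {N : ℕ} (x : EuclideanSpace ℝ (Fin N)) : sfun x = ‖x‖^2 := by
  rw [EuclideanSpace.norm_eq, Real.sq_sqrt (by positivity)]
  unfold sfun
  congr 1; ext j
  rw [Real.norm_eq_abs, sq_abs, sq]

lemma ufun_eq {N : ℕ} (x : EuclideanSpace ℝ (Fin N)) : ufun x = Real.log ‖x‖ := by
  unfold ufun
  rw [sfun_eq, Real.log_pow]
  push_cast; ring

lemma hasFDerivAt_ufun {N : ℕ} (x : EuclideanSpace ℝ (Fin N)) (hx : sfun x ≠ 0) :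
    HasFDerivAt ufun ((1 / (2 * sfun x)) • Ls x) x := by
  have hlog : HasFDerivAt (fun y : EuclideanSpace ℝ (Fin N) => Real.log (sfun y))
      ((sfun x)⁻¹ • Ls x) x :=
    (Real.hasDerivAt_log hx).comp_hasFDerivAt x (hasFDerivAt_sfun x)
  have heq : (ufun (N:=N)) = fun y => (1/2 : ℝ) * Real.log (sfun y) := by
    funext y; unfold ufun; ring
  rw [heq]
  have := hlog.const_mul (1/2 : ℝ)
  refine this.congr_fderiv ?_
  rw [smul_smul]
  congr 1
  field_simp

lemma hasFDerivAt_vfun (lam mu : ℝ) {N : ℕ} (x : EuclideanSpace ℝ (Fin N)) (hx : sfun x ≠ 0) :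
    HasFDerivAt (vfun lam mu) (g1 lam mu (ufun x) • ((1 / (2 * sfun x)) • Ls x)) x := by
  have h : HasFDerivAt (g lam mu ∘ ufun) (g1 lam mu (ufun x) • ((1 / (2 * sfun x)) • Ls x)) x :=
    (hasDerivAt_g lam mu (ufun x)).comp_hasFDerivAt x (hasFDerivAt_ufun x hx)
  exact h

lemma fderiv_vfun_apply (lam mu : ℝ) {N : ℕ} (x : EuclideanSpace ℝ (Fin N)) (hx : sfun x ≠ 0)
    (i : Fin N) :
    fderiv ℝ (vfun lam mu) x (EuclideanSpace.single i (1:ℝ))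
      = g1 lam mu (ufun x) * (x i * (sfun x)⁻¹) := by
  rw [(hasFDerivAt_vfun lam mu x hx).fderiv]
  rw [ContinuousLinearMap.smul_apply, ContinuousLinearMap.smul_apply, Ls_apply]
  simp only [smul_eq_mul]
  field_simp

lemma continuous_sfun {N : ℕ} : Continuous (sfun (N:=N)) := by
  have : (sfun (N:=N)) = fun x => ‖x‖^2 := funext sfun_eq
  rw [this]
  continuity

lemma isOpen_sne {N : ℕ} : IsOpen {x : EuclideanSpace ℝ (Fin N) | sfun x ≠ 0} :=
  isOpen_compl_singleton.preimage continuous_sfun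

lemma lap_vfun (lam mu : ℝ) {N : ℕ} (x : EuclideanSpace ℝ (Fin N)) (hx : sfun x ≠ 0) :
    lap (vfun lam mu) x
      = (g2 lam mu (ufun x) + ((N:ℝ) - 2) * g1 lam mu (ufun x)) / sfun x := by
  have key : ∀ i : Fin N,
      fderiv ℝ (fun y => fderiv ℝ (vfun lam mu) y (EuclideanSpace.single i 1)) x
        (EuclideanSpace.single i 1)
      = ((g2 lam mu (ufun x) - 2 * g1 lam mu (ufun x)) * (x i * x i)
          + g1 lam mu (ufun x) * sfun x) / (sfun x)^2 := by
    intro i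
    have hev : (fun y => fderiv ℝ (vfun lam mu) y (EuclideanSpace.single i 1)) =ᶠ[nhds x]
        (fun y => g1 lam mu (ufun y) * (y i * (sfun y)⁻¹)) := by
      filter_upwards [isOpen_sne.mem_nhds hx] with y hy
      exact fderiv_vfun_apply lam mu y hy i
    rw [hev.fderiv_eq]
    have hA : HasFDerivAt (fun y : EuclideanSpace ℝ (Fin N) => g1 lam mu (ufun y))
        (g2 lam mu (ufun x) • ((1 / (2 * sfun x)) • Ls x)) x :=
      (hasDerivAt_g1 lam mu (ufun x)).comp_hasFDerivAt x (hasFDerivAt_ufun x hx)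
    have hinv : HasFDerivAt (fun y : EuclideanSpace ℝ (Fin N) => (sfun y)⁻¹)
        ((-((sfun x)^2)⁻¹) • Ls x) x :=
      (hasDerivAt_inv hx).comp_hasFDerivAt x (hasFDerivAt_sfun x)
    have hp : HasFDerivAt (fun y : EuclideanSpace ℝ (Fin N) => y i)
        (EuclideanSpace.proj (𝕜 := ℝ) i) x := (EuclideanSpace.proj (𝕜 := ℝ) i).hasFDerivAt
    have hB : HasFDerivAt (fun y : EuclideanSpace ℝ (Fin N) => y i * (sfun y)⁻¹)
        (x i • ((-((sfun x)^2)⁻¹) • Ls x) + (sfun x)⁻¹ • (EuclideanSpace.proj (𝕜 := ℝ) i)) x :=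
      hp.mul hinv
    have hAB := hA.mul hB
    rw [(hA.fun_mul hB).fderiv]
    have hproj : (EuclideanSpace.proj (𝕜 := ℝ) i) (EuclideanSpace.single i (1:ℝ)) = 1 := by
      show (EuclideanSpace.single i (1:ℝ)) i = 1
      rw [EuclideanSpace.single_apply]
      simp
    simp only [ContinuousLinearMap.add_apply, ContinuousLinearMap.smul_apply, smul_eq_mul,
      Ls_apply, hproj, ContinuousLinearMap.neg_apply]
    field_simp
    ring
  unfold lap
  rw [Finset.sum_congr rfl (fun i _ => key i)]
  rw [← Finset.sum_div]
  rw [Finset.sum_add_distrib, ← Finset.mul_sum]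
  have hsum : ∑ i : Fin N, x i * x i = sfun x := rfl
  rw [hsum]
  rw [Finset.sum_const, Finset.card_univ, Fintype.card_fin, nsmul_eq_mul]
  field_simp
  ring

lemma contDiffOn_vfun (lam mu : ℝ) {N : ℕ} :
    ContDiffOn ℝ (⊤:ℕ∞) (vfun lam mu (N:=N)) {x | sfun x ≠ 0} := by
  intro x hx
  apply ContDiffAt.contDiffWithinAt
  have hs : ContDiff ℝ (⊤:ℕ∞) (sfun (N:=N)) := by
    unfold sfun
    exact ContDiff.sum (fun j _ =>
      ((EuclideanSpace.proj (𝕜 := ℝ) j).contDiff).mul ((EuclideanSpace.proj (𝕜 := ℝ) j).contDiff))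
  have hlog : ContDiffAt ℝ (⊤:ℕ∞) Real.log (sfun x) := Real.contDiffAt_log.mpr hx
  have hu : ContDiffAt ℝ (⊤:ℕ∞) (ufun (N:=N)) x := by
    unfold ufun
    exact (hlog.comp x hs.contDiffAt).div_const 2
  exact ((contDiff_g lam mu).contDiffAt).comp x hu


end S14

open S14 Real in
set_option maxHeartbeats 1000000 in
theorem stmt_14 {N : ℕ} (hN : 3 ≤ N) (R₀ : ℝ) (hR₀ : 0 < R₀)
    (E : EuclideanSpace ℝ (Fin N) → ℝ)
    (hE : ContDiffOn ℝ (⊤ : ℕ∞) E {x | R₀ < ‖x‖})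
    (hEpos : ∀ x : EuclideanSpace ℝ (Fin N), R₀ < ‖x‖ → 0 < E x)
    (hEsuper : ∀ x : EuclideanSpace ℝ (Fin N), R₀ < ‖x‖ → 0 ≤ -(lap E x)) :
    Filter.liminf
        (fun x : EuclideanSpace ℝ (Fin N) => ((‖x‖ ^ 2 * (-(lap E x)) / E x : ℝ) : EReal))
        (Filter.comap (fun x : EuclideanSpace ℝ (Fin N) => ‖x‖) Filter.atTop) ≤
      ((((N : ℝ) - 2) ^ 2 / 4 : ℝ) : EReal) := by
  classical
  by_contra hcon
  push_neg at hcon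
  set C : ℝ := ((N : ℝ) - 2) ^ 2 / 4 with hCdef
  set Lf := Filter.liminf
      (fun x : EuclideanSpace ℝ (Fin N) => ((‖x‖ ^ 2 * (-(lap E x)) / E x : ℝ) : EReal))
      (Filter.comap (fun x : EuclideanSpace ℝ (Fin N) => ‖x‖) Filter.atTop) with hLfdef
  have h1 : (C : EReal) < min Lf ((C + 1 : ℝ) : EReal) := by
    apply lt_min hcon
    exact_mod_cast lt_add_one C
  obtain ⟨z, hz1, hz2⟩ := exists_between h1
  have hzt : z ≠ ⊤ := ne_top_of_lt (lt_of_lt_of_le hz2 (min_le_right _ _))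
  have hzb : z ≠ ⊥ := ne_bot_of_gt hz1
  set c' : ℝ := z.toReal with hc'def
  have hzc : (c' : EReal) = z := EReal.coe_toReal hzt hzb
  have hCc' : C < c' := by
    rw [← EReal.coe_lt_coe_iff]
    rw [hzc]; exact hz1
  have hlt : (c' : EReal) < Lf := by
    rw [hzc]; exact lt_of_lt_of_le hz2 (min_le_left _ _)
  have hev := eventually_lt_of_lt_liminf hlt
  rw [Filter.eventually_comap] at hev
  rw [Filter.eventually_atTop] at hev
  obtain ⟨R₁, hR₁⟩ := hev
  have hpt : ∀ x : EuclideanSpace ℝ (Fin N), R₁ ≤ ‖x‖ →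
      c' < ‖x‖ ^ 2 * (-(lap E x)) / E x := by
    intro x hx
    exact EReal.coe_lt_coe_iff.mp (hR₁ ‖x‖ hx x rfl)
  set lam : ℝ := ((N : ℝ) - 2) / 2 with hlamdef
  have hlam2 : lam ^ 2 = C := by rw [hCdef, hlamdef]; ring
  set c : ℝ := (lam ^ 2 + c') / 2 with hcdef
  have hc1 : lam ^ 2 < c := by rw [hcdef]; rw [hlam2]; linarith
  have hc2 : c < c' := by rw [hcdef]; rw [hlam2]; linarith
  set mu : ℝ := Real.sqrt (c - lam ^ 2) with hmudef
  have hmu : 0 < mu := Real.sqrt_pos.mpr (by linarith)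
  have hmusq : mu ^ 2 = c - lam ^ 2 := Real.sq_sqrt (by linarith)
  have hlmc : lam ^ 2 + mu ^ 2 = c := by linarith
  set R₂ : ℝ := max R₀ R₁ with hR₂def
  have hR₂pos : 0 < R₂ := lt_of_lt_of_le hR₀ (le_max_left _ _)
  have hπ := Real.pi_pos
  set k : ℕ := ⌈(mu * (Real.log R₂ + 1) + π / 2) / (2 * π)⌉₊ with hkdef
  have hk : mu * (Real.log R₂ + 1) + π / 2 ≤ 2 * π * k := by
    have h := Nat.le_ceil ((mu * (Real.log R₂ + 1) + π / 2) / (2 * π))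
    rw [div_le_iff₀ (by positivity)] at h
    rw [hkdef]
    linarith
  set t₁ : ℝ := (2 * π * k - π / 2) / mu with ht₁def
  set t₂ : ℝ := t₁ + π / mu with ht₂def
  have hmut₁ : mu * t₁ = 2 * π * k - π / 2 := by
    rw [ht₁def]; field_simp
  have hmut₂ : mu * t₂ = 2 * π * k + π / 2 := by
    rw [ht₂def, mul_add, hmut₁]
    field_simp
    ring
  have ht₁ : Real.log R₂ + 1 ≤ t₁ := by
    rw [ht₁def, le_div_iff₀ hmu]
    linarith
  have ht₁₂ : t₁ < t₂ := by
    rw [ht₂def]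
    have : 0 < π / mu := by positivity
    linarith
  set r₁ : ℝ := Real.exp t₁ with hr₁def
  set r₂ : ℝ := Real.exp t₂ with hr₂def
  have hr₁pos : 0 < r₁ := Real.exp_pos _
  have hR₂r₁ : R₂ < r₁ := by
    calc R₂ = Real.exp (Real.log R₂) := (Real.exp_log hR₂pos).symm
    _ < Real.exp t₁ := Real.exp_lt_exp.mpr (by linarith)
  have hR₀r₁ : R₀ < r₁ := lt_of_le_of_lt (le_max_left _ _) hR₂r₁
  have hR₁r₁ : R₁ < r₁ := lt_of_le_of_lt (le_max_right _ _) hR₂r₁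
  have hr₁₂ : r₁ < r₂ := Real.exp_lt_exp.mpr ht₁₂
  set A : Set (EuclideanSpace ℝ (Fin N)) := {x | r₁ ≤ ‖x‖ ∧ ‖x‖ ≤ r₂} with hAdef
  have hAclosed : IsClosed A := by
    have : A = {x : EuclideanSpace ℝ (Fin N) | r₁ ≤ ‖x‖} ∩ {x | ‖x‖ ≤ r₂} := rfl
    rw [this]
    exact (isClosed_le continuous_const continuous_norm).inter
      (isClosed_le continuous_norm continuous_const)
  have hAcomp : IsCompact A :=
    (isCompact_closedBall (0 : EuclideanSpace ℝ (Fin N)) r₂).of_isClosed_subset hAclosed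
      (fun x hx => mem_closedBall_zero_iff.mpr hx.2)
  have hAnorm : ∀ x ∈ A, R₀ < ‖x‖ := fun x hx => lt_of_lt_of_le hR₀r₁ hx.1
  have hAnormpos : ∀ x ∈ A, 0 < ‖x‖ := fun x hx => lt_of_lt_of_le hr₁pos hx.1
  have hAs : ∀ x ∈ A, sfun x ≠ 0 := by
    intro x hx
    rw [sfun_eq]
    have := hAnormpos x hx
    positivity
  have hu_mem : ∀ x ∈ A, t₁ ≤ ufun x ∧ ufun x ≤ t₂ := by
    intro x hx
    rw [ufun_eq]
    constructor
    · calc t₁ = Real.log r₁ := (Real.log_exp t₁).symm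
      _ ≤ Real.log ‖x‖ := Real.log_le_log hr₁pos hx.1
    · calc Real.log ‖x‖ ≤ Real.log r₂ := Real.log_le_log (hAnormpos x hx) hx.2
      _ = t₂ := Real.log_exp t₂
  have key_cos : ∀ θ : ℝ, Real.cos (θ + 2 * π * k) = Real.cos θ := by
    intro θ
    have h := Real.cos_add_int_mul_two_pi θ (k : ℤ)
    push_cast at h
    convert h using 2
    ring
  have hv_nonneg : ∀ x ∈ A, 0 ≤ vfun lam mu x := by
    intro x hx
    have h := hu_mem x hx
    have hcos : 0 ≤ Real.cos (mu * ufun x) := by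
      have heq : mu * ufun x = (mu * ufun x - 2 * π * k) + 2 * π * k := by ring
      rw [heq, key_cos]
      apply Real.cos_nonneg_of_mem_Icc
      constructor
      · have := mul_le_mul_of_nonneg_left h.1 (le_of_lt hmu)
        rw [hmut₁] at this
        linarith
      · have := mul_le_mul_of_nonneg_left h.2 (le_of_lt hmu)
        rw [hmut₂] at this
        linarith
    exact mul_nonneg (le_of_lt (Real.exp_pos _)) hcos
  have hv_boundary : ∀ x ∈ A, (‖x‖ = r₁ ∨ ‖x‖ = r₂) → vfun lam mu x = 0 := by
    intro x _ hb
    show Real.exp _ * Real.cos (mu * ufun x) = 0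
    have hcz : Real.cos (mu * ufun x) = 0 := by
      rcases hb with hb | hb
      · have hux : ufun x = t₁ := by rw [ufun_eq, hb, hr₁def, Real.log_exp]
        rw [hux]
        have heq : mu * t₁ = (-(π / 2)) + 2 * π * k := by rw [hmut₁]; ring
        rw [heq, key_cos, Real.cos_neg, Real.cos_pi_div_two]
      · have hux : ufun x = t₂ := by rw [ufun_eq, hb, hr₂def, Real.log_exp]
        rw [hux]
        have heq : mu * t₂ = (π / 2) + 2 * π * k := by rw [hmut₂]; ring
        rw [heq, key_cos, Real.cos_pi_div_two]
    rw [hcz, mul_zero]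
  set tm : ℝ := t₁ + π / (2 * mu) with htmdef
  set rm : ℝ := Real.exp tm with hrmdef
  have hpdm : 0 < π / (2 * mu) := by positivity
  have hdm2 : π / (2 * mu) < π / mu := by
    rw [div_lt_div_iff₀ (by positivity) hmu]
    have h := mul_pos hπ hmu
    linarith
  have htm1 : t₁ < tm := by rw [htmdef]; linarith
  have htm2 : tm < t₂ := by rw [htmdef, ht₂def]; linarith
  set i0 : Fin N := ⟨0, by omega⟩ with hi0def
  set p : EuclideanSpace ℝ (Fin N) := rm • EuclideanSpace.single i0 (1 : ℝ) with hpdef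
  have hpnorm : ‖p‖ = rm := by
    rw [hpdef, norm_smul, EuclideanSpace.norm_single, norm_one, mul_one, Real.norm_eq_abs,
      abs_of_pos (Real.exp_pos _)]
  have hpA : p ∈ A := by
    constructor
    · rw [hpnorm, hr₁def, hrmdef]
      exact Real.exp_le_exp.mpr (le_of_lt htm1)
    · rw [hpnorm, hr₂def, hrmdef]
      exact Real.exp_le_exp.mpr (le_of_lt htm2)
  have hvm_pos : 0 < vfun lam mu p := by
    show 0 < Real.exp _ * Real.cos (mu * ufun p)
    have hup : ufun p = tm := by rw [ufun_eq, hpnorm, hrmdef, Real.log_exp]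
    have hmtm : mu * tm = 0 + 2 * π * k := by
      rw [htmdef, mul_add, hmut₁]
      field_simp
      ring
    rw [hup, hmtm, key_cos, Real.cos_zero]
    have := Real.exp_pos (-(lam * tm))
    linarith
  set ψ : EuclideanSpace ℝ (Fin N) → ℝ := fun x => vfun lam mu x / E x with hψdef
  have hEcont : ContinuousOn E A := hE.continuousOn.mono (fun x hx => hAnorm x hx)
  have hvcont : ContinuousOn (vfun lam mu) A :=
    (contDiffOn_vfun lam mu).continuousOn.mono (fun x hx => hAs x hx)
  have hψcont : ContinuousOn ψ A :=
    hvcont.div hEcont (fun x hx => ne_of_gt (hEpos x (hAnorm x hx)))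
  obtain ⟨x₀, hx₀A, hmax⟩ := hAcomp.exists_isMaxOn ⟨p, hpA⟩ hψcont
  rw [isMaxOn_iff] at hmax
  have hEx₀ : 0 < E x₀ := hEpos x₀ (hAnorm x₀ hx₀A)
  have hψx₀ : 0 < ψ x₀ :=
    lt_of_lt_of_le (div_pos hvm_pos (hEpos p (hAnorm p hpA))) (hmax p hpA)
  have hvx₀ : 0 < vfun lam mu x₀ := by
    rw [hψdef] at hψx₀
    simp only at hψx₀
    rcases div_pos_iff.mp hψx₀ with ⟨h1, _⟩ | ⟨_, h2⟩
    · exact h1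
    · linarith
  have hx₀r₁ : r₁ < ‖x₀‖ := by
    rcases lt_or_eq_of_le hx₀A.1 with h | h
    · exact h
    · exfalso
      have := hv_boundary x₀ hx₀A (Or.inl h.symm)
      linarith
  have hx₀r₂ : ‖x₀‖ < r₂ := by
    rcases lt_or_eq_of_le hx₀A.2 with h | h
    · exact h
    · exfalso
      have := hv_boundary x₀ hx₀A (Or.inr h)
      linarith
  set κ : ℝ := E x₀ / vfun lam mu x₀ with hκdef
  have hκpos : 0 < κ := div_pos hEx₀ hvx₀
  have hκv : κ * vfun lam mu x₀ = E x₀ := by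
    rw [hκdef]
    field_simp
  set w : EuclideanSpace ℝ (Fin N) → ℝ := fun y => E y - κ * vfun lam mu y with hwdef
  have hw0 : w x₀ = 0 := by
    rw [hwdef]
    simp only
    rw [hκv]
    ring
  have hwnn : ∀ x ∈ A, 0 ≤ w x := by
    intro x hx
    have h := hmax x hx
    have hEx : 0 < E x := hEpos x (hAnorm x hx)
    rw [hψdef] at h
    simp only at h
    rw [div_le_div_iff₀ hEx hEx₀] at h
    rw [hwdef]
    simp only
    rw [sub_nonneg]
    calc κ * vfun lam mu x = E x₀ * vfun lam mu x / vfun lam mu x₀ := by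
          rw [hκdef]; ring
    _ ≤ E x := by
          rw [div_le_iff₀ hvx₀]
          linarith
  set O : Set (EuclideanSpace ℝ (Fin N)) := {x | r₁ < ‖x‖ ∧ ‖x‖ < r₂} with hOdef
  have hOopen : IsOpen O := by
    have : O = {x : EuclideanSpace ℝ (Fin N) | r₁ < ‖x‖} ∩ {x | ‖x‖ < r₂} := rfl
    rw [this]
    exact (isOpen_lt continuous_const continuous_norm).inter
      (isOpen_lt continuous_norm continuous_const)
  have hminw : IsLocalMin w x₀ := by
    have hx₀O : x₀ ∈ O := ⟨hx₀r₁, hx₀r₂⟩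
    filter_upwards [hOopen.mem_nhds hx₀O] with y hy
    rw [hw0]
    exact hwnn y ⟨le_of_lt hy.1, le_of_lt hy.2⟩
  set U : Set (EuclideanSpace ℝ (Fin N)) := {x | R₀ < ‖x‖} with hUdef
  have hUopen : IsOpen U := isOpen_lt continuous_const continuous_norm
  have hUsub : U ⊆ {x | sfun x ≠ 0} := by
    intro x hx
    rw [Set.mem_setOf_eq, sfun_eq]
    have : 0 < ‖x‖ := lt_trans hR₀ hx
    positivity
  have hvU : ContDiffOn ℝ (⊤ : ℕ∞) (vfun lam mu) U := (contDiffOn_vfun lam mu).mono hUsub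
  have hx₀U : x₀ ∈ U := hAnorm x₀ hx₀A
  have hwC : ContDiffOn ℝ (⊤ : ℕ∞) w U := hE.sub (contDiffOn_const.mul hvU)
  have hlapw : 0 ≤ lap w x₀ :=
    Finset.sum_nonneg (fun i _ => second_directional_nonneg hUopen hx₀U hwC hminw _)
  have hsplit : lap w x₀ = lap E x₀ - κ * lap (vfun lam mu) x₀ :=
    lap_sub_smul hUopen hE hvU κ hx₀U
  have hnx₀pos : 0 < ‖x₀‖ := hAnormpos x₀ hx₀A
  have hsx₀ : sfun x₀ = ‖x₀‖ ^ 2 := sfun_eq x₀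
  have hsx₀pos : 0 < sfun x₀ := by rw [hsx₀]; positivity
  have hlapv : lap (vfun lam mu) x₀ = -c * vfun lam mu x₀ / sfun x₀ := by
    rw [lap_vfun lam mu x₀ (ne_of_gt hsx₀pos)]
    congr 1
    have h2lam : (N : ℝ) - 2 = 2 * lam := by rw [hlamdef]; ring
    rw [h2lam]
    have := g_identity lam mu (ufun x₀)
    have hv : vfun lam mu x₀ = g lam mu (ufun x₀) := rfl
    rw [hv]
    rw [← hlmc]
    linarith [this]
  have hEineq : -(lap E x₀) ≤ c * E x₀ / sfun x₀ := by
    have h := hlapw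
    rw [hsplit, hlapv] at h
    have heq : κ * (-c * vfun lam mu x₀ / sfun x₀) = -c * (κ * vfun lam mu x₀) / sfun x₀ := by
      ring
    rw [heq, hκv] at h
    have : -c * E x₀ / sfun x₀ = -(c * E x₀ / sfun x₀) := by ring
    rw [this] at h
    linarith
  have hR₁x₀ : R₁ ≤ ‖x₀‖ := le_of_lt (lt_of_lt_of_le hR₁r₁ hx₀A.1)
  have hptx₀ := hpt x₀ hR₁x₀
  have hcontr : ‖x₀‖ ^ 2 * (-(lap E x₀)) / E x₀ ≤ c := by
    rw [div_le_iff₀ hEx₀]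
    have h1 : ‖x₀‖ ^ 2 * (-(lap E x₀)) ≤ ‖x₀‖ ^ 2 * (c * E x₀ / sfun x₀) :=
      mul_le_mul_of_nonneg_left hEineq (sq_nonneg _)
    have h2 : ‖x₀‖ ^ 2 * (c * E x₀ / sfun x₀) = c * E x₀ := by
      rw [hsx₀]
      field_simp
    linarith
  linarith
end

section
/- Let Ω ⊆ ℝ^N (N ≥ 3) be an open set, let b, c : Ω → ℝ be continuous with c ≥ 0, and suppose u ∈ C²(Ω) is a positive classical supersolution of −Δu + b(x)|∇u| = c(x)u on Ω. Suppose there exist γ ≥ 0 and a smooth function E : Ω → ℝ with E > 0 and −ΔE ≥ 0 on Ω such that b(x)² ≤ γ² |∇E(x)|²/E(x)² for all x ∈ Ω. Then for every test function φ ∈ C_c^∞(Ω) we have ∫_Ω (c − b²/4) φ² dx ≤ (1 + 2γ) ∫_Ω |∇φ|² dx. -/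
open MeasureTheory

open Set Manifold Function

section Aux
variable {N : ℕ}
local notation "ℝN" => EuclideanSpace ℝ (Fin N)

lemma aux_cutoff {Ω K : Set ℝN} (hΩ : IsOpen Ω) (hK : IsCompact K) (hKΩ : K ⊆ Ω) :
    ∃ (χ : ℝN → ℝ) (U : Set ℝN), ContDiff ℝ (⊤:ℕ∞) χ ∧ HasCompactSupport χ ∧ tsupport χ ⊆ Ω ∧
      IsOpen U ∧ K ⊆ U ∧ ∀ x ∈ U, χ x = 1 := by
  obtain ⟨L, hL, hKL, hLΩ⟩ := exists_compact_between hK hΩ hKΩ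
  obtain ⟨f, hf1, hf0, hf01⟩ := exists_contMDiffMap_one_nhds_of_subset_interior (𝓘(ℝ, ℝN)) (n := (⊤ : ℕ∞))
    (s := K) (t := L) hK.isClosed hKL
  obtain ⟨U, hUo, hKU, hU1⟩ := eventually_nhdsSet_iff_exists.mp hf1
  refine ⟨f, U, ?_, ?_, ?_, hUo, hKU, hU1⟩
  · exact contMDiff_iff_contDiff.mp f.contMDiff
  · exact HasCompactSupport.of_support_subset_isCompact hL (support_subset_iff'.mpr hf0)
  · exact (hL.isClosed.closure_subset_iff.mpr (support_subset_iff'.mpr hf0)).trans hLΩ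

lemma aux_ext {Ω : Set ℝN} (hΩ : IsOpen Ω)
    {χ : ℝN → ℝ} (hχ : ContDiff ℝ (⊤:ℕ∞) χ) (hχΩ : tsupport χ ⊆ Ω)
    {F : ℝN → ℝ} (hF : ContDiffOn ℝ 1 F Ω) :
    ∃ G : ℝN → ℝ, ∃ G' : ℝN → (ℝN →L[ℝ] ℝ),
      (∀ x, HasFDerivAt G (G' x) x) ∧ Continuous G ∧ (∀ v, Continuous (fun x => G' x v)) ∧
      (∀ x ∉ tsupport χ, G x = 0) ∧ (∀ x ∉ tsupport χ, G' x = 0) ∧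
      (∀ U, IsOpen U → U ⊆ Ω → (∀ y ∈ U, χ y = 1) →
        ∀ x ∈ U, G x = F x ∧ G' x = fderiv ℝ F x) := by
  classical
  set m : ℝN → ℝ := fun y => χ y * F y with hm
  have hmul : ContDiffOn ℝ 1 m Ω := ((hχ.of_le (by exact_mod_cast le_top)).contDiffOn).mul hF
  set G : ℝN → ℝ := fun x => if x ∈ Ω then m x else 0 with hG
  set G' : ℝN → (ℝN →L[ℝ] ℝ) := fun x => if x ∈ Ω then fderiv ℝ m x else 0 with hG'
  have hGz : ∀ x ∉ tsupport χ, G x = 0 := by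
    intro x hx
    have : χ x = 0 := image_eq_zero_of_notMem_tsupport hx
    by_cases h : x ∈ Ω <;> simp [hG, h, hm, this]
  have hGeq : ∀ x ∈ Ω, G =ᶠ[nhds x] m := by
    intro x hx
    filter_upwards [hΩ.mem_nhds hx] with y hy
    simp [hG, hy]
  have hmz : ∀ x ∉ tsupport χ, m =ᶠ[nhds x] 0 := by
    intro x hx
    filter_upwards [(isClosed_tsupport χ).isOpen_compl.mem_nhds hx] with y hy
    simp [hm, image_eq_zero_of_notMem_tsupport hy]
  have hGz' : ∀ x ∉ tsupport χ, G =ᶠ[nhds x] 0 := by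
    intro x hx
    filter_upwards [(isClosed_tsupport χ).isOpen_compl.mem_nhds hx] with y hy
    exact hGz y hy
  have hG'z : ∀ x ∉ tsupport χ, G' x = 0 := by
    intro x hx
    by_cases h : x ∈ Ω
    · have : fderiv ℝ m x = fderiv ℝ (0 : ℝN → ℝ) x := (hmz x hx).fderiv_eq
      show (if x ∈ Ω then fderiv ℝ m x else 0) = 0
      rw [if_pos h, this, show (0:ℝN→ℝ) = fun _ => (0:ℝ) from rfl, fderiv_fun_const]; rfl
    · simp [hG', h]
  have hdiff : ∀ x, HasFDerivAt G (G' x) x := by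
    intro x
    by_cases h : x ∈ Ω
    · have hd : DifferentiableAt ℝ m x :=
        (hmul.differentiableOn one_ne_zero).differentiableAt (hΩ.mem_nhds h)
      have := hd.hasFDerivAt.congr_of_eventuallyEq (hGeq x h)
      simpa [hG', if_pos h] using this
    · have hx : x ∉ tsupport χ := fun hc => h (hχΩ hc)
      have : HasFDerivAt G (0 : ℝN →L[ℝ] ℝ) x :=
        (hasFDerivAt_const (0:ℝ) x).congr_of_eventuallyEq (hGz' x hx)
      simpa [hG'z x hx] using this
  have hGc : Continuous G := by
    rw [continuous_iff_continuousAt]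
    exact fun x => (hdiff x).differentiableAt.continuousAt
  have hG'c : ∀ v, Continuous (fun x => G' x v) := by
    intro v
    rw [continuous_iff_continuousAt]
    intro x
    by_cases h : x ∈ Ω
    · have hcf : ContinuousOn (fderiv ℝ m) Ω := hmul.continuousOn_fderiv_of_isOpen hΩ le_rfl
      have h1 : ContinuousAt (fun y => fderiv ℝ m y v) x :=
        ((ContinuousLinearMap.apply ℝ ℝ v).continuous.continuousAt).comp
          (hcf.continuousAt (hΩ.mem_nhds h))
      apply h1.congr
      filter_upwards [hΩ.mem_nhds h] with y hy
      simp [hG', hy]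
    · have hx : x ∉ tsupport χ := fun hc => h (hχΩ hc)
      have : (fun y => G' y v) =ᶠ[nhds x] 0 := by
        filter_upwards [(isClosed_tsupport χ).isOpen_compl.mem_nhds hx] with y hy
        simp [hG'z y hy]
      exact (continuousAt_const (y := (0:ℝ))).congr this.symm
  refine ⟨G, G', hdiff, hGc, hG'c, hGz, hG'z, ?_⟩
  intro U hUo hUΩ hU1 x hxU
  have hxΩ : x ∈ Ω := hUΩ hxU
  have hmF : m =ᶠ[nhds x] F := by
    filter_upwards [hUo.mem_nhds hxU] with y hy
    simp [hm, hU1 y hy]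
  constructor
  · simp [hG, hxΩ, hm, hU1 x hxU]
  · simp only [hG', if_pos hxΩ]
    exact hmF.fderiv_eq

lemma aux_ibp {G : ℝN → ℝ} {G' : ℝN → (ℝN →L[ℝ] ℝ)}
    (hdiff : ∀ x, HasFDerivAt G (G' x) x) (hGc : Continuous G)
    (hG'c : ∀ v, Continuous fun x => G' x v)
    (hGsupp : HasCompactSupport G)
    {ψ : ℝN → ℝ} (hψ : ContDiff ℝ (⊤:ℕ∞) ψ) (hψc : HasCompactSupport ψ) (v : ℝN) :
    ∫ x, ψ x * G' x v = - ∫ x, fderiv ℝ ψ x v * G x := by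
  have hψ'c : Continuous fun x => fderiv ℝ ψ x v :=
    ((ContinuousLinearMap.apply ℝ ℝ v).continuous).comp
      (hψ.continuous_fderiv (by simp))
  have hfg' : Integrable (fun x => ψ x * G' x v) := by
    apply Continuous.integrable_of_hasCompactSupport ((hψ.continuous.mul (hG'c v)))
    exact hψc.mul_right
  have hf'g : Integrable (fun x => fderiv ℝ ψ x v * G x) := by
    apply Continuous.integrable_of_hasCompactSupport (hψ'c.mul hGc)
    exact hGsupp.mul_left
  have hfg : Integrable (fun x => ψ x * G x) := by
    apply Continuous.integrable_of_hasCompactSupport ((hψ.continuous.mul hGc))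
    exact hψc.mul_right
  have key := integral_mul_fderiv_eq_neg_fderiv_mul_of_integrable (f := ψ) (g := G) (v := v)
    hf'g ?_ hfg (fun x _ => hψ.differentiable (by simp) x)
    (fun x _ => (hdiff x).differentiableAt)
  · rw [← key]
    congr 1; ext x; rw [(hdiff x).fderiv]
  · refine hfg'.congr (Filter.Eventually.of_forall fun x => ?_)
    simp only [(hdiff x).fderiv]

lemma aux_inner_grad (f : ℝN → ℝ) (x v : ℝN) :
    (inner ℝ (gradient f x) v : ℝ) = fderiv ℝ f x v := by
  simp [gradient, InnerProductSpace.toDual_symm_apply]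

lemma aux_grad_comp (f : ℝN → ℝ) (x : ℝN) (i : Fin N) :
    gradient f x i = fderiv ℝ f x (EuclideanSpace.single i 1) := by
  rw [← aux_inner_grad, EuclideanSpace.inner_single_right]
  simp [real_inner_comm]

lemma aux_norm_grad_sq (f : ℝN → ℝ) (x : ℝN) :
    ‖gradient f x‖^2 = ∑ i, (fderiv ℝ f x (EuclideanSpace.single i 1))^2 := by
  rw [EuclideanSpace.norm_eq, Real.sq_sqrt (by positivity)]
  exact Finset.sum_congr rfl fun i _ => by rw [← aux_grad_comp]; simp [sq_abs]

lemma aux_fderiv_div_apply {P Q : ℝN → ℝ} {x : ℝN} (hP : DifferentiableAt ℝ P x)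
    (hQ : DifferentiableAt ℝ Q x) (hQ0 : Q x ≠ 0) (w : ℝN) :
    fderiv ℝ (fun y => P y / Q y) x w
      = (fderiv ℝ P x w * Q x - P x * fderiv ℝ Q x w) / Q x ^ 2 := by
  have hinv : HasFDerivAt (fun y => (Q y)⁻¹) ((-(Q x ^ 2)⁻¹) • fderiv ℝ Q x) x :=
    (hasDerivAt_inv hQ0).comp_hasFDerivAt x hQ.hasFDerivAt
  have hdiv := hP.hasFDerivAt.mul' hinv
  have heq : (fun y => P y / Q y) = fun y => P y * (Q y)⁻¹ := by
    funext y; rw [div_eq_mul_inv]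
  rw [heq, show (fun y => P y * (Q y)⁻¹) = P * fun y => (Q y)⁻¹ from rfl, hdiv.fderiv]
  simp only [ContinuousLinearMap.add_apply, ContinuousLinearMap.smul_apply,
    ContinuousLinearMap.smulRight_apply, smul_eq_mul, op_smul_eq_mul]
  field_simp
  ring

lemma aux_cont_onmul {Ω : Set ℝN} (hΩ : IsOpen Ω) {h g : ℝN → ℝ} (hh : ContinuousOn h Ω)
    (hg : Continuous g) (hgΩ : tsupport g ⊆ Ω) : Continuous fun x => h x * g x := by
  rw [continuous_iff_continuousAt]; intro x
  by_cases hx : x ∈ Ω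
  · exact (hh.continuousAt (hΩ.mem_nhds hx)).mul hg.continuousAt
  · have hxt : x ∉ tsupport g := fun hc => hx (hgΩ hc)
    have hev : (fun y => h y * g y) =ᶠ[nhds x] fun _ => (0:ℝ) := by
      filter_upwards [(isClosed_tsupport g).isOpen_compl.mem_nhds hxt] with y hy
      simp [image_eq_zero_of_notMem_tsupport hy]
    exact ContinuousAt.congr continuousAt_const hev.symm

end Aux
set_option maxHeartbeats 2000000 in
theorem stmt_17 {N : ℕ} (hN : 3 ≤ N) (Ω : Set (EuclideanSpace ℝ (Fin N))) (hΩ : IsOpen Ω)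
    (b c : EuclideanSpace ℝ (Fin N) → ℝ)
    (hb : ContinuousOn b Ω) (hc : ContinuousOn c Ω) (hc0 : ∀ x ∈ Ω, 0 ≤ c x)
    (u : EuclideanSpace ℝ (Fin N) → ℝ) (hu : ContDiffOn ℝ 2 u Ω)
    (hupos : ∀ x ∈ Ω, 0 < u x)
    (hsuper : ∀ x ∈ Ω, c x * u x ≤ -(lap u x) + b x * ‖gradient u x‖)
    (γ : ℝ) (hγ : 0 ≤ γ)
    (E : EuclideanSpace ℝ (Fin N) → ℝ) (hE : ContDiffOn ℝ (⊤ : ℕ∞) E Ω)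
    (hEpos : ∀ x ∈ Ω, 0 < E x) (hEsuper : ∀ x ∈ Ω, 0 ≤ -(lap E x))
    (hbE : ∀ x ∈ Ω, (b x) ^ 2 ≤ γ ^ 2 * ‖gradient E x‖ ^ 2 / (E x) ^ 2)
    (φ : EuclideanSpace ℝ (Fin N) → ℝ)
    (hφ : ContDiff ℝ (⊤ : ℕ∞) φ) (hφc : HasCompactSupport φ) (hφΩ : tsupport φ ⊆ Ω) :
    (∫ x in Ω, (c x - (b x) ^ 2 / 4) * (φ x) ^ 2) ≤
      (1 + 2 * γ) * ∫ x in Ω, ‖gradient φ x‖ ^ 2 := by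
  classical
  have hφz : ∀ x ∉ tsupport φ, φ x = 0 := fun x hx => image_eq_zero_of_notMem_tsupport hx
  set ψ : EuclideanSpace ℝ (Fin N) → ℝ := fun x => φ x ^ 2 with hψdef
  have hψeq : ψ = fun y => φ y * φ y := funext fun y => by simp [hψdef]; ring
  have hψsm : ContDiff ℝ (⊤:ℕ∞) ψ := by rw [hψeq]; exact hφ.mul hφ
  have hψz : ∀ x ∉ tsupport φ, ψ x = 0 := fun x hx => by simp [hψdef, hφz x hx]
  have hψc : HasCompactSupport ψ := HasCompactSupport.intro hφc hψz
  have hψnn : ∀ x, 0 ≤ ψ x := fun x => sq_nonneg _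
  have hsψ : tsupport ψ ⊆ tsupport φ :=
    closure_minimal (Function.support_subset_iff'.mpr hψz) (isClosed_tsupport φ)
  have hφd : Differentiable ℝ φ := hφ.differentiable (by simp)
  have hfψ : ∀ x v, fderiv ℝ ψ x v = 2 * (φ x * fderiv ℝ φ x v) := by
    intro x v
    rw [hψeq, fderiv_fun_mul (hφd x) (hφd x)]
    simp only [ContinuousLinearMap.add_apply, ContinuousLinearMap.smul_apply, smul_eq_mul]
    ring
  -- cutoff
  obtain ⟨χ, U0, hχsm, hχc, hχΩ, hU0o, hKU0, hU01⟩ := aux_cutoff hΩ hφc hφΩ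
  set U : Set (EuclideanSpace ℝ (Fin N)) := U0 ∩ Ω with hUdef
  have hUo : IsOpen U := hU0o.inter hΩ
  have hUΩ : U ⊆ Ω := Set.inter_subset_right
  have hKU : tsupport φ ⊆ U := Set.subset_inter hKU0 hφΩ
  have hU1 : ∀ y ∈ U, χ y = 1 := fun y hy => hU01 y hy.1
  have hmemU : ∀ x, φ x ≠ 0 → x ∈ U :=
    fun x hx => hKU (subset_tsupport φ (Function.mem_support.mpr hx))
  -- derivatives of u
  have hDu : ∀ i : Fin N,
      ContDiffOn ℝ 1 (fun x => fderiv ℝ u x (EuclideanSpace.single i 1)) Ω :=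
    fun i => (hu.fderiv_of_isOpen hΩ (by norm_num)).clm_apply contDiffOn_const
  have hu1 : ContDiffOn ℝ 1 u Ω := hu.of_le (by norm_num)
  have hFu : ∀ i : Fin N,
      ContDiffOn ℝ 1 (fun x => fderiv ℝ u x (EuclideanSpace.single i 1) / u x) Ω :=
    fun i => (hDu i).div hu1 (fun x hx => (hupos x hx).ne')
  choose V V' hVd hVc hV'c hVz hV'z hVag using fun i : Fin N => aux_ext hΩ hχsm hχΩ (hFu i)
  have hVU := fun (i : Fin N) => hVag i U hUo hUΩ hU1
  have hVcs : ∀ i, HasCompactSupport (V i) := fun i => HasCompactSupport.intro hχc (hVz i)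
  -- derivatives of E
  have hDE : ∀ i : Fin N,
      ContDiffOn ℝ 1 (fun x => fderiv ℝ E x (EuclideanSpace.single i 1)) Ω :=
    fun i => (hE.fderiv_of_isOpen hΩ (by exact WithTop.coe_le_coe.mpr le_top)).clm_apply contDiffOn_const
  have hE1 : ContDiffOn ℝ 1 E Ω := hE.of_le (by exact_mod_cast le_top)
  have hFE : ∀ i : Fin N,
      ContDiffOn ℝ 1 (fun x => fderiv ℝ E x (EuclideanSpace.single i 1) / E x) Ω :=
    fun i => (hDE i).div hE1 (fun x hx => (hEpos x hx).ne')
  choose W W' hWd hWc hW'c hWz hW'z hWag using fun i : Fin N => aux_ext hΩ hχsm hχΩ (hFE i)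
  have hWU := fun (i : Fin N) => hWag i U hUo hUΩ hU1
  have hWcs : ∀ i, HasCompactSupport (W i) := fun i => HasCompactSupport.intro hχc (hWz i)
  -- pointwise differentiability
  have hudiff : ∀ x ∈ Ω, DifferentiableAt ℝ u x :=
    fun x hx => (hu1.differentiableOn one_ne_zero).differentiableAt (hΩ.mem_nhds hx)
  have hEdiff : ∀ x ∈ Ω, DifferentiableAt ℝ E x :=
    fun x hx => (hE1.differentiableOn one_ne_zero).differentiableAt (hΩ.mem_nhds hx)
  have hDudiff : ∀ (i : Fin N), ∀ x ∈ Ω,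
      DifferentiableAt ℝ (fun y => fderiv ℝ u y (EuclideanSpace.single i 1)) x :=
    fun i x hx => ((hDu i).differentiableOn one_ne_zero).differentiableAt (hΩ.mem_nhds hx)
  have hDEdiff : ∀ (i : Fin N), ∀ x ∈ Ω,
      DifferentiableAt ℝ (fun y => fderiv ℝ E y (EuclideanSpace.single i 1)) x :=
    fun i x hx => ((hDE i).differentiableOn one_ne_zero).differentiableAt (hΩ.mem_nhds hx)
  -- divergence formulas on U
  have hdivV : ∀ x ∈ U, ∑ i, V' i x (EuclideanSpace.single i 1)
      = lap u x / u x - (∑ i, (fderiv ℝ u x (EuclideanSpace.single i 1))^2) / u x ^ 2 := by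
    intro x hx
    have hxΩ : x ∈ Ω := hUΩ hx
    have h0 : u x ≠ 0 := (hupos x hxΩ).ne'
    have hcalc : ∀ i : Fin N, V' i x (EuclideanSpace.single i 1)
        = (fderiv ℝ (fun y => fderiv ℝ u y (EuclideanSpace.single i 1)) x
            (EuclideanSpace.single i 1) * u x
           - (fderiv ℝ u x (EuclideanSpace.single i 1))^2) / u x ^ 2 := by
      intro i
      rw [(hVU i x hx).2, aux_fderiv_div_apply (hDudiff i x hxΩ) (hudiff x hxΩ) h0]
      ring
    rw [Finset.sum_congr rfl fun i _ => hcalc i]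
    have hlap : lap u x = ∑ i, fderiv ℝ (fun y => fderiv ℝ u y (EuclideanSpace.single i 1)) x
        (EuclideanSpace.single i 1) := rfl
    rw [hlap, ← Finset.sum_div, Finset.sum_sub_distrib, ← Finset.sum_mul]
    field_simp
  have hdivW : ∀ x ∈ U, ∑ i, W' i x (EuclideanSpace.single i 1)
      = lap E x / E x - (∑ i, (fderiv ℝ E x (EuclideanSpace.single i 1))^2) / E x ^ 2 := by
    intro x hx
    have hxΩ : x ∈ Ω := hUΩ hx
    have h0 : E x ≠ 0 := (hEpos x hxΩ).ne'
    have hcalc : ∀ i : Fin N, W' i x (EuclideanSpace.single i 1)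
        = (fderiv ℝ (fun y => fderiv ℝ E y (EuclideanSpace.single i 1)) x
            (EuclideanSpace.single i 1) * E x
           - (fderiv ℝ E x (EuclideanSpace.single i 1))^2) / E x ^ 2 := by
      intro i
      rw [(hWU i x hx).2, aux_fderiv_div_apply (hDEdiff i x hxΩ) (hEdiff x hxΩ) h0]
      ring
    rw [Finset.sum_congr rfl fun i _ => hcalc i]
    have hlap : lap E x = ∑ i, fderiv ℝ (fun y => fderiv ℝ E y (EuclideanSpace.single i 1)) x
        (EuclideanSpace.single i 1) := rfl
    rw [hlap, ← Finset.sum_div, Finset.sum_sub_distrib, ← Finset.sum_mul]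
    field_simp
  -- gradient of φ
  set rφ : EuclideanSpace ℝ (Fin N) → ℝ := fun x => ‖gradient φ x‖ with hrφdef
  have hrφ2 : ∀ x, rφ x ^ 2 = ∑ i, (fderiv ℝ φ x (EuclideanSpace.single i 1))^2 :=
    fun x => aux_norm_grad_sq φ x
  have hgradφc : Continuous (gradient φ) := by
    have h1 : Continuous (fderiv ℝ φ) := hφ.continuous_fderiv (by simp)
    exact ((InnerProductSpace.toDual ℝ _).symm.continuous).comp h1
  have hrφc : Continuous rφ := hgradφc.norm
  have hrφnn : ∀ x, 0 ≤ rφ x := fun x => norm_nonneg _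
  have hgradz : ∀ x ∉ tsupport φ, gradient φ x = 0 := by
    intro x hx
    have hev : φ =ᶠ[nhds x] 0 := by
      filter_upwards [(isClosed_tsupport φ).isOpen_compl.mem_nhds hx] with y hy
      exact hφz y hy
    have h1 : fderiv ℝ φ x = fderiv ℝ (0 : EuclideanSpace ℝ (Fin N) → ℝ) x := hev.fderiv_eq
    have h0 : fderiv ℝ φ x = 0 := by
      rw [h1, show (0:EuclideanSpace ℝ (Fin N)→ℝ) = fun _ => (0:ℝ) from rfl, fderiv_fun_const]; rfl
    show (InnerProductSpace.toDual ℝ _).symm (fderiv ℝ φ x) = 0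
    rw [h0]; simp
  -- key scalar quantities
  set nv : EuclideanSpace ℝ (Fin N) → ℝ := fun x => Real.sqrt (∑ i, (V i x)^2) with hnvdef
  have hnvc : Continuous nv := Real.continuous_sqrt.comp (continuous_finset_sum _ fun i _ => (hVc i).pow 2)
  have hnvnn : ∀ x, 0 ≤ nv x := fun x => Real.sqrt_nonneg _
  have hnvsq : ∀ x, nv x ^ 2 = ∑ i, (V i x)^2 :=
    fun x => Real.sq_sqrt (Finset.sum_nonneg fun i _ => sq_nonneg _)
  set SW : EuclideanSpace ℝ (Fin N) → ℝ := fun x => ∑ i, (W i x)^2 with hSWdef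
  have hSWc : Continuous SW := continuous_finset_sum _ fun i _ => (hWc i).pow 2
  have hSWnn : ∀ x, 0 ≤ SW x := fun x => Finset.sum_nonneg fun i _ => sq_nonneg _
  -- integrability helper
  have hci : ∀ {f : EuclideanSpace ℝ (Fin N) → ℝ}, Continuous f → HasCompactSupport f →
      Integrable f := fun {f} hf hs => hf.integrable_of_hasCompactSupport hs
  -- the Dirichlet energy
  set Gr : ℝ := ∫ x, rφ x ^ 2 with hGrdef
  have hrint : Integrable (fun x => rφ x ^ 2) :=
    hci (hrφc.pow 2) (HasCompactSupport.intro hφc fun x hx => by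
      simp [hrφdef, hgradz x hx])
  have hGrnn : 0 ≤ Gr := integral_nonneg fun x => sq_nonneg _
  -- ===== Step A : ∫ ψ |∇E/E|² ≤ 4 Gr =====
  set A : ℝ := ∫ x, ψ x * SW x with hAdef
  have hIA1 : Integrable (fun x => ψ x * SW x) :=
    hci (hψsm.continuous.mul hSWc)
      (HasCompactSupport.intro hφc fun x hx => by simp [hψz x hx])
  have hIA2 : Integrable (fun x => ψ x * ∑ i, W' i x (EuclideanSpace.single i 1)) :=
    hci (hψsm.continuous.mul (continuous_finset_sum _ fun i _ => hW'c i _))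
      (HasCompactSupport.intro hφc fun x hx => by simp [hψz x hx])
  have hIA2i : ∀ i : Fin N, Integrable (fun x => ψ x * W' i x (EuclideanSpace.single i 1)) :=
    fun i => hci (hψsm.continuous.mul (hW'c i _))
      (HasCompactSupport.intro hφc fun x hx => by simp [hψz x hx])
  have hψ'cont : ∀ v, Continuous fun x => fderiv ℝ ψ x v := fun v =>
    ((ContinuousLinearMap.apply ℝ ℝ v).continuous).comp
      (hψsm.continuous_fderiv (by simp))
  have hIA4i : ∀ i : Fin N,
      Integrable (fun x => fderiv ℝ ψ x (EuclideanSpace.single i 1) * W i x) :=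
    fun i => hci ((hψ'cont _).mul (hWc i))
      (HasCompactSupport.intro hφc fun x hx => by
        simp [hfψ x _, hφz x hx])
  have hSWU : ∀ x ∈ U, SW x
      = (∑ i, (fderiv ℝ E x (EuclideanSpace.single i 1))^2) / E x ^ 2 := by
    intro x hxU
    show (∑ i, (W i x)^2) = _
    rw [Finset.sum_congr rfl fun i _ => by rw [(hWU i x hxU).1, div_pow], ← Finset.sum_div]
  have hA1 : A ≤ ∫ x, -(ψ x * ∑ i, W' i x (EuclideanSpace.single i 1)) := by
    rw [hAdef]
    refine integral_mono hIA1 hIA2.neg ?_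
    intro x
    by_cases hx : φ x = 0
    · simp [hψdef, hx]
    · have hxU : x ∈ U := hmemU x hx
      have hxΩ : x ∈ Ω := hUΩ hxU
      have hE0 : 0 < E x := hEpos x hxΩ
      show ψ x * SW x ≤ -(ψ x * ∑ i, W' i x (EuclideanSpace.single i 1))
      rw [hdivW x hxU, hSWU x hxU]
      have h1 : 0 ≤ ψ x * (-(lap E x) / E x) :=
        mul_nonneg (hψnn x) (div_nonneg (hEsuper x hxΩ) hE0.le)
      have expand : -(ψ x * (lap E x / E x
          - (∑ i, (fderiv ℝ E x (EuclideanSpace.single i 1))^2) / E x ^ 2))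
          = ψ x * (-(lap E x) / E x)
            + ψ x * ((∑ i, (fderiv ℝ E x (EuclideanSpace.single i 1))^2) / E x ^ 2) := by
        ring
      rw [expand]
      linarith [h1]
  have hA2 : ∫ x, -(ψ x * ∑ i, W' i x (EuclideanSpace.single i 1))
      = ∑ i, ∫ x, fderiv ℝ ψ x (EuclideanSpace.single i 1) * W i x := by
    rw [integral_neg]
    have h1 : (fun x => ψ x * ∑ i, W' i x (EuclideanSpace.single i 1))
        = fun x => ∑ i, ψ x * W' i x (EuclideanSpace.single i 1) := by
      funext x; rw [Finset.mul_sum]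
    rw [h1, integral_finset_sum _ (fun i _ => hIA2i i)]
    rw [Finset.sum_congr rfl fun i _ => aux_ibp (hWd i) (hWc i) (fun v => hW'c i v)
      (hWcs i) hψsm hψc (EuclideanSpace.single i 1)]
    rw [Finset.sum_neg_distrib, neg_neg]
  have hA3 : ∑ i, ∫ x, fderiv ℝ ψ x (EuclideanSpace.single i 1) * W i x
      = ∫ x, ∑ i, fderiv ℝ ψ x (EuclideanSpace.single i 1) * W i x :=
    (integral_finset_sum _ (fun i _ => hIA4i i)).symm
  have hA4 : (∫ x, ∑ i, fderiv ℝ ψ x (EuclideanSpace.single i 1) * W i x)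
      ≤ ∫ x, ((1/2) * (ψ x * SW x) + 2 * rφ x ^ 2) := by
    refine integral_mono (by
        refine hci (continuous_finset_sum _ fun i _ => (hψ'cont _).mul (hWc i)) ?_
        exact HasCompactSupport.intro hφc fun x hx => by
          simp [hfψ x _, hφz x hx])
      ((hIA1.const_mul _).add (hrint.const_mul _)) ?_
    intro x
    have step1 : ∀ i : Fin N, fderiv ℝ ψ x (EuclideanSpace.single i 1) * W i x
        ≤ (1/2) * (φ x ^ 2 * (W i x)^2)
          + 2 * (fderiv ℝ φ x (EuclideanSpace.single i 1))^2 := by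
      intro i
      rw [hfψ x _]
      nlinarith [sq_nonneg (φ x * W i x - 2 * fderiv ℝ φ x (EuclideanSpace.single i 1))]
    calc (∑ i, fderiv ℝ ψ x (EuclideanSpace.single i 1) * W i x)
        ≤ ∑ i, ((1/2) * (φ x ^ 2 * (W i x)^2)
            + 2 * (fderiv ℝ φ x (EuclideanSpace.single i 1))^2) :=
          Finset.sum_le_sum fun i _ => step1 i
      _ = (1/2) * (ψ x * SW x) + 2 * rφ x ^ 2 := by
          rw [Finset.sum_add_distrib, ← Finset.mul_sum, ← Finset.mul_sum, ← Finset.mul_sum,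
            hrφ2 x]
  have hA5 : (∫ x, ((1/2) * (ψ x * SW x) + 2 * rφ x ^ 2)) = (1/2) * A + 2 * Gr := by
    rw [integral_add (hIA1.const_mul _) (hrint.const_mul _), integral_const_mul,
      integral_const_mul, hAdef, hGrdef]
  have hA : A ≤ 4 * Gr := by
    have := ((hA1.trans (le_of_eq hA2)).trans (le_of_eq hA3)).trans (hA4.trans (le_of_eq hA5))
    linarith
  -- ===== Step B =====
  have hSVU : ∀ x ∈ U, (∑ i, (V i x)^2)
      = (∑ i, (fderiv ℝ u x (EuclideanSpace.single i 1))^2) / u x ^ 2 := by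
    intro x hxU
    rw [Finset.sum_congr rfl fun i _ => by rw [(hVU i x hxU).1, div_pow], ← Finset.sum_div]
  have hsψΩ : tsupport ψ ⊆ Ω := hsψ.trans hφΩ
  -- integrability of the various integrands
  have hIc1 : Integrable (fun x => ψ x * ∑ i, V' i x (EuclideanSpace.single i 1)) :=
    hci (hψsm.continuous.mul (continuous_finset_sum _ fun i _ => hV'c i _))
      (HasCompactSupport.intro hφc fun x hx => by simp [hψz x hx])
  have hIc1i : ∀ i : Fin N, Integrable (fun x => ψ x * V' i x (EuclideanSpace.single i 1)) :=
    fun i => hci (hψsm.continuous.mul (hV'c i _))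
      (HasCompactSupport.intro hφc fun x hx => by simp [hψz x hx])
  have hIBi : ∀ i : Fin N,
      Integrable (fun x => fderiv ℝ ψ x (EuclideanSpace.single i 1) * V i x) :=
    fun i => hci ((hψ'cont _).mul (hVc i))
      (HasCompactSupport.intro hφc fun x hx => by simp [hfψ x _, hφz x hx])
  have hIsum : Integrable (fun x => ∑ i, fderiv ℝ ψ x (EuclideanSpace.single i 1) * V i x) := by
    refine hci (continuous_finset_sum _ fun i _ => (hψ'cont _).mul (hVc i)) ?_
    exact HasCompactSupport.intro hφc fun x hx => by simp [hfψ x _, hφz x hx]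
  have htsup1 : tsupport (fun x => ψ x * nv x) ⊆ Ω :=
    (closure_minimal (Function.support_subset_iff'.mpr fun x hx => by
      simp [hψz x hx]) (isClosed_tsupport φ)).trans hφΩ
  have hIc2 : Integrable (fun x => ψ x * nv x ^ 2 - b x * (ψ x * nv x) + b x ^ 2 / 4 * ψ x) := by
    refine hci ?_ (HasCompactSupport.intro hφc fun x hx => by simp [hψz x hx])
    refine ((hψsm.continuous.mul (hnvc.pow 2)).sub
      (aux_cont_onmul hΩ hb (hψsm.continuous.mul hnvc) htsup1)).add ?_
    exact aux_cont_onmul hΩ ((hb.pow 2).div_const 4) hψsm.continuous hsψΩ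
  have hIf2 : Integrable (fun x => -(ψ x * ∑ i, V' i x (EuclideanSpace.single i 1))
      - (ψ x * nv x ^ 2 - b x * (ψ x * nv x) + b x ^ 2 / 4 * ψ x)) := hIc1.neg.sub hIc2
  have hIl : Integrable (fun x => (c x - b x ^ 2 / 4) * ψ x) :=
    hci (aux_cont_onmul hΩ (hc.sub ((hb.pow 2).div_const 4)) hψsm.continuous hsψΩ)
      (HasCompactSupport.intro hφc fun x hx => by simp [hψz x hx])
  have htsup2 : tsupport (fun x => |φ x| * rφ x) ⊆ Ω :=
    (closure_minimal (Function.support_subset_iff'.mpr fun x hx => by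
      simp [hφz x hx]) (isClosed_tsupport φ)).trans hφΩ
  have hIBt : Integrable (fun x => |b x| * (|φ x| * rφ x)) :=
    hci (aux_cont_onmul hΩ hb.abs ((hφ.continuous.abs).mul hrφc) htsup2)
      (HasCompactSupport.intro hφc fun x hx => by simp [hφz x hx])
  have hIrhs : Integrable (fun x => rφ x ^ 2 + |b x| * (|φ x| * rφ x)) := hrint.add hIBt
  -- B1 : pointwise supersolution estimate
  have hB1 : (∫ x, (c x - b x ^ 2 / 4) * ψ x)
      ≤ ∫ x, (-(ψ x * ∑ i, V' i x (EuclideanSpace.single i 1))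
        - (ψ x * nv x ^ 2 - b x * (ψ x * nv x) + b x ^ 2 / 4 * ψ x)) := by
    refine integral_mono hIl hIf2 ?_
    intro x
    by_cases hx : φ x = 0
    · simp [hψdef, hx]
    · have hxU : x ∈ U := hmemU x hx
      have hxΩ : x ∈ Ω := hUΩ hxU
      have hu0 : 0 < u x := hupos x hxΩ
      show (c x - b x ^ 2 / 4) * ψ x ≤ -(ψ x * ∑ i, V' i x (EuclideanSpace.single i 1))
        - (ψ x * nv x ^ 2 - b x * (ψ x * nv x) + b x ^ 2 / 4 * ψ x)
      have hsq1 : nv x ^ 2 = (‖gradient u x‖ / u x) ^ 2 := by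
        rw [hnvsq x, hSVU x hxU, div_pow, aux_norm_grad_sq]
      have hnvx : nv x = ‖gradient u x‖ / u x := by
        rw [← Real.sqrt_sq (hnvnn x), hsq1,
          Real.sqrt_sq (div_nonneg (norm_nonneg _) hu0.le)]
      have hc' : c x ≤ -(lap u x) / u x + b x * (‖gradient u x‖ / u x) := by
        have h2 : c x ≤ (-(lap u x) + b x * ‖gradient u x‖) / u x :=
          (le_div_iff₀ hu0).mpr (hsuper x hxΩ)
        exact h2.trans_eq (by ring)
      have key : -(ψ x * ∑ i, V' i x (EuclideanSpace.single i 1))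
          - (ψ x * nv x ^ 2 - b x * (ψ x * nv x) + b x ^ 2 / 4 * ψ x)
          = ψ x * ((-(lap u x) / u x + b x * (‖gradient u x‖ / u x)) - b x ^ 2 / 4) := by
        rw [hdivV x hxU, hnvx, div_pow, aux_norm_grad_sq]
        ring
      rw [key]
      nlinarith [mul_le_mul_of_nonneg_left hc' (hψnn x)]
  -- B2 : integration by parts
  have hB2 : (∫ x, (-(ψ x * ∑ i, V' i x (EuclideanSpace.single i 1))
        - (ψ x * nv x ^ 2 - b x * (ψ x * nv x) + b x ^ 2 / 4 * ψ x)))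
      = (∫ x, ∑ i, fderiv ℝ ψ x (EuclideanSpace.single i 1) * V i x)
        - ∫ x, (ψ x * nv x ^ 2 - b x * (ψ x * nv x) + b x ^ 2 / 4 * ψ x) := by
    have hIc1n : Integrable (fun x => -(ψ x * ∑ i, V' i x (EuclideanSpace.single i 1))) :=
      hIc1.neg
    rw [integral_sub hIc1n hIc2, integral_neg]
    congr 1
    have h1 : (fun x => ψ x * ∑ i, V' i x (EuclideanSpace.single i 1))
        = fun x => ∑ i, ψ x * V' i x (EuclideanSpace.single i 1) := by
      funext x; rw [Finset.mul_sum]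
    rw [h1, integral_finset_sum _ (fun i _ => hIc1i i)]
    rw [Finset.sum_congr rfl fun i _ => aux_ibp (hVd i) (hVc i) (fun v => hV'c i v)
      (hVcs i) hψsm hψc (EuclideanSpace.single i 1)]
    rw [Finset.sum_neg_distrib, neg_neg]
    exact (integral_finset_sum _ (fun i _ => hIBi i)).symm
  -- B3 : pointwise Cauchy-Schwarz estimate
  have hB3 : (∫ x, ∑ i, fderiv ℝ ψ x (EuclideanSpace.single i 1) * V i x)
        - (∫ x, (ψ x * nv x ^ 2 - b x * (ψ x * nv x) + b x ^ 2 / 4 * ψ x))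
      ≤ ∫ x, (rφ x ^ 2 + |b x| * (|φ x| * rφ x)) := by
    rw [← integral_sub hIsum hIc2]
    refine integral_mono (hIsum.sub hIc2) hIrhs ?_
    intro x
    show (∑ i, fderiv ℝ ψ x (EuclideanSpace.single i 1) * V i x)
        - (ψ x * nv x ^ 2 - b x * (ψ x * nv x) + b x ^ 2 / 4 * ψ x)
      ≤ rφ x ^ 2 + |b x| * (|φ x| * rφ x)
    by_cases hx : φ x = 0
    · simp [hfψ, hx, hψdef]
      rw [← hψdef]; simp only [hfψ, hx, zero_mul, mul_zero, Finset.sum_const_zero]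
      positivity
    · have hsum : (∑ i, fderiv ℝ ψ x (EuclideanSpace.single i 1) * V i x)
          = 2 * φ x * ∑ i, fderiv ℝ φ x (EuclideanSpace.single i 1) * V i x := by
        rw [Finset.mul_sum]
        exact Finset.sum_congr rfl fun i _ => by rw [hfψ x _]; ring
      have hcs : (∑ i, fderiv ℝ φ x (EuclideanSpace.single i 1) * V i x) ^ 2
          ≤ (rφ x * nv x) ^ 2 := by
        rw [mul_pow, hrφ2 x, hnvsq x]
        exact Finset.sum_mul_sq_le_sq_mul_sq _ _ _
      have habs : |∑ i, fderiv ℝ φ x (EuclideanSpace.single i 1) * V i x| ≤ rφ x * nv x := by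
        calc |∑ i, fderiv ℝ φ x (EuclideanSpace.single i 1) * V i x|
            = Real.sqrt ((∑ i, fderiv ℝ φ x (EuclideanSpace.single i 1) * V i x) ^ 2) :=
              (Real.sqrt_sq_eq_abs _).symm
          _ ≤ Real.sqrt ((rφ x * nv x) ^ 2) := Real.sqrt_le_sqrt hcs
          _ = rφ x * nv x := Real.sqrt_sq (mul_nonneg (hrφnn x) (hnvnn x))
      rw [hsum]
      set s := ∑ i, fderiv ℝ φ x (EuclideanSpace.single i 1) * V i x
      set p := φ x
      set r := rφ x
      set t := nv x
      set B := b x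
      show 2 * p * s - (ψ x * t ^ 2 - B * (ψ x * t) + B ^ 2 / 4 * ψ x)
          ≤ r ^ 2 + |B| * (|p| * r)
      have hψx : ψ x = p ^ 2 := rfl
      rw [hψx]
      have h2 : 2 * p * s ≤ 2 * (|p| * (r * t)) := by
        have ha : p * s ≤ |p * s| := le_abs_self _
        have hb' : |p * s| = |p| * |s| := abs_mul _ _
        have hcc : |p| * |s| ≤ |p| * (r * t) :=
          mul_le_mul_of_nonneg_left habs (abs_nonneg p)
        nlinarith
      have h3 : t ≤ |t - B / 2| + |B| / 2 := by
        have h31 : t = (t - B / 2) + B / 2 := by ring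
        have h32 : t - B / 2 ≤ |t - B / 2| := le_abs_self _
        have h33 : B ≤ |B| := le_abs_self _
        linarith
      have h5 : 2 * (|p| * (r * t)) ≤ 2 * (|p| * r * |t - B / 2|) + |B| * (|p| * r) := by
        have h51 := mul_le_mul_of_nonneg_left h3
          (mul_nonneg (abs_nonneg p) (hrφnn x) : (0:ℝ) ≤ |p| * r)
        nlinarith [abs_nonneg B]
      have h4 : 2 * (|p| * r * |t - B / 2|) ≤ r ^ 2 + p ^ 2 * (t - B / 2) ^ 2 := by
        nlinarith [sq_nonneg (r - |p| * |t - B / 2|), sq_abs p, sq_abs (t - B / 2),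
          abs_nonneg p, abs_nonneg (t - B / 2)]
      nlinarith [h2, h5, h4]
  -- B4 : the drift term
  have hBt : (∫ x, |b x| * (|φ x| * rφ x)) ≤ 2 * γ * Gr := by
    rcases eq_or_lt_of_le hγ with hγ0 | hγpos
    · have hzero : (fun x => |b x| * (|φ x| * rφ x)) = fun _ => (0:ℝ) := by
        funext x
        by_cases hx : φ x = 0
        · simp [hx]
        · have hxΩ : x ∈ Ω := hUΩ (hmemU x hx)
          have hb0 : b x = 0 := by
            have := hbE x hxΩ
            rw [← hγ0] at this
            simp at this
            nlinarith [sq_nonneg (b x), this]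
          simp [hb0]
      rw [hzero]
      simp [← hγ0]
    · have hbSW : ∀ x, φ x ≠ 0 → b x ^ 2 ≤ γ ^ 2 * SW x := by
        intro x hx
        have hxU : x ∈ U := hmemU x hx
        have hxΩ : x ∈ Ω := hUΩ hxU
        have h1 := hbE x hxΩ
        have h2 : γ ^ 2 * ‖gradient E x‖ ^ 2 / E x ^ 2 = γ ^ 2 * SW x := by
          rw [hSWU x hxU, aux_norm_grad_sq]
          ring
        linarith [h1.trans_eq h2]
      have hpt : ∀ x, |b x| * (|φ x| * rφ x) ≤ γ * rφ x ^ 2 + γ / 4 * (ψ x * SW x) := by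
        intro x
        by_cases hx : φ x = 0
        · simp [hx, hψdef]
          positivity
        · have hb2 := hbSW x hx
          have h4γ : (0:ℝ) < 4 * γ := by linarith
          have hh : 4 * γ * (|b x| * (|φ x| * rφ x))
              ≤ 4 * γ * (γ * rφ x ^ 2 + γ / 4 * (φ x ^ 2 * SW x)) := by
            nlinarith [sq_nonneg (2 * γ * rφ x - |φ x| * |b x|), sq_abs (φ x), sq_abs (b x),
              mul_le_mul_of_nonneg_left hb2 (sq_nonneg (φ x)), abs_nonneg (b x),
              abs_nonneg (φ x), hrφnn x]
          have := le_of_mul_le_mul_left (by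
            calc 4 * γ * (|b x| * (|φ x| * rφ x))
                ≤ 4 * γ * (γ * rφ x ^ 2 + γ / 4 * (φ x ^ 2 * SW x)) := hh) h4γ
          exact this
      calc (∫ x, |b x| * (|φ x| * rφ x))
          ≤ ∫ x, (γ * rφ x ^ 2 + γ / 4 * (ψ x * SW x)) :=
            integral_mono hIBt ((hrint.const_mul _).add (hIA1.const_mul _)) hpt
        _ = γ * Gr + γ / 4 * A := by
            rw [integral_add (hrint.const_mul _) (hIA1.const_mul _), integral_const_mul,
              integral_const_mul, hGrdef, hAdef]
        _ ≤ γ * Gr + γ / 4 * (4 * Gr) := by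
            have := mul_le_mul_of_nonneg_left hA (by positivity : (0:ℝ) ≤ γ / 4)
            linarith
        _ = 2 * γ * Gr := by ring
  -- final assembly
  have hGr2 : (∫ x, (rφ x ^ 2 + |b x| * (|φ x| * rφ x))) = Gr + ∫ x, |b x| * (|φ x| * rφ x) := by
    rw [integral_add hrint hIBt, hGrdef]
  have hmain : (∫ x, (c x - b x ^ 2 / 4) * ψ x) ≤ (1 + 2 * γ) * Gr := by
    have h := ((hB1.trans (le_of_eq hB2)).trans hB3).trans (le_of_eq hGr2)
    linarith [hBt]
  have hLconv : (∫ x in Ω, (c x - (b x) ^ 2 / 4) * (φ x) ^ 2)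
      = ∫ x, (c x - b x ^ 2 / 4) * ψ x := by
    rw [setIntegral_eq_integral_of_forall_compl_eq_zero
      (fun x hx => by simp [hφz x (fun hc' => hx (hφΩ hc'))])]
  have hGconv : (∫ x in Ω, ‖gradient φ x‖ ^ 2) = Gr := by
    rw [setIntegral_eq_integral_of_forall_compl_eq_zero
      (fun x hx => by rw [hgradz x (fun hc' => hx (hφΩ hc'))]; simp)]
  rw [hLconv, hGconv]
  exact hmain
end
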